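/- arXiv:1801.07863 — 5 statements merged into one kernel-verified Lean document; each statement's English description precedes it below -/
import Mathlib

section
/- Let G be a finite simple undirected graph on n vertices in which every vertex has degree at least 1, with random-walk matrix P, let s ∈ [0,1]^n, and let ℓ, u be reals with 0 < ℓ ≤ u ≤ 1. For α ∈ [ℓ,u]^n write A = diag(α) and f(s,α) = 1ᵀ (I − (I−A)P)⁻¹ A s (the total sum of equilibrium opinions). Then there exists a vector α* ∈ [ℓ,u]^n with α*_i ∈ {ℓ, u} for every i such that f(s,α*) ≥ f(s,α) for every α ∈ [ℓ,u]^n; that is, the opinion maximization problem always has an optimal solution in which every resistance parameter takes one of the two extreme values ℓ or u. -/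
open Matrix BigOperators

/-- The random-walk matrix of a graph: `P i j = 1 / deg i` if `(i,j)` is an edge, else `0`. -/
noncomputable def rwMatrix {n : ℕ} (G : SimpleGraph (Fin n)) [DecidableRel G.Adj] :
    Matrix (Fin n) (Fin n) ℝ :=
  fun i j => if G.Adj i j then (1 : ℝ) / (G.degree i) else 0

/-- The total sum of equilibrium opinions `f(s,α) = 1ᵀ (I − (I−A)P)⁻¹ A s`,
where `A = diag α`. -/
noncomputable def totalOpinion {n : ℕ} (G : SimpleGraph (Fin n)) [DecidableRel G.Adj]
    (s α : Fin n → ℝ) : ℝ :=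
  ∑ i, (((1 - (1 - Matrix.diagonal α) * rwMatrix G)⁻¹ *ᵥ (Matrix.diagonal α *ᵥ s)) i)

namespace OpinionAux

variable {n : ℕ} (G : SimpleGraph (Fin n)) [DecidableRel G.Adj]

/-- The matrix `I - (I-A)P`. -/
noncomputable def Mmat (α : Fin n → ℝ) : Matrix (Fin n) (Fin n) ℝ :=
  1 - (1 - Matrix.diagonal α) * rwMatrix G

lemma rw_nonneg (i j : Fin n) : 0 ≤ rwMatrix G i j := by
  unfold rwMatrix
  split
  · positivity
  · exact le_rfl

lemma rw_rowsum (hdeg : ∀ v, 0 < G.degree v) (i : Fin n) :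
    ∑ j, rwMatrix G i j = 1 := by
  unfold rwMatrix
  rw [Finset.sum_ite, Finset.sum_const_zero, add_zero, Finset.sum_const]
  have hcard : (Finset.univ.filter (fun j => G.Adj i j)).card = G.degree i := by
    rw [← SimpleGraph.card_neighborFinset_eq_degree]
    congr 1
    rw [SimpleGraph.neighborFinset_eq_filter]
  rw [hcard]
  have h0 : (G.degree i : ℝ) ≠ 0 := by
    exact_mod_cast (hdeg i).ne'
  rw [nsmul_eq_mul]
  field_simp

lemma Mmat_apply (α : Fin n → ℝ) (a b : Fin n) :
    Mmat G α a b = (if a = b then 1 else 0) - (1 - α a) * rwMatrix G a b := by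
  have h1 : (1 : Matrix (Fin n) (Fin n) ℝ) - Matrix.diagonal α
      = Matrix.diagonal (fun i => 1 - α i) := by
    rw [← Matrix.diagonal_one, ← Matrix.diagonal_sub]
  unfold Mmat
  rw [h1]
  simp [Matrix.sub_apply, Matrix.diagonal_mul, Matrix.one_apply]

lemma totalOpinion_eq (s α : Fin n → ℝ) :
    totalOpinion G s α = ∑ i, (((Mmat G α)⁻¹ *ᵥ (Matrix.diagonal α *ᵥ s)) i) := rfl

/-- `I - (I-A)P` has nonzero determinant when `0 < α ≤ 1`. -/
lemma det_ne_zero (hdeg : ∀ v, 0 < G.degree v) (α : Fin n → ℝ)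
    (hα0 : ∀ i, 0 < α i) (hα1 : ∀ i, α i ≤ 1) :
    (Mmat G α).det ≠ 0 := by
  intro hdet
  obtain ⟨v, hv, hMv⟩ := (Matrix.exists_mulVec_eq_zero_iff).mpr hdet
  obtain ⟨j0, hj0⟩ := Function.ne_iff.mp hv
  obtain ⟨i, _, hi⟩ := Finset.exists_max_image Finset.univ (fun j => |v j|)
    ⟨j0, Finset.mem_univ j0⟩
  have hipos : 0 < |v i| := by
    have := hi j0 (Finset.mem_univ j0)
    have h0 : 0 < |v j0| := abs_pos.mpr hj0
    linarith
  have hrow : (Mmat G α *ᵥ v) i = 0 := by rw [hMv]; rfl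
  have hexp : v i = (1 - α i) * ∑ j, rwMatrix G i j * v j := by
    have : ∑ j, Mmat G α i j * v j = 0 := hrow
    simp only [Mmat_apply] at this
    rw [Finset.sum_congr rfl (fun j _ => by ring_nf :
      ∀ j ∈ Finset.univ, ((if i = j then (1:ℝ) else 0) - (1 - α i) * rwMatrix G i j) * v j
        = (if i = j then (1:ℝ) else 0) * v j - (1 - α i) * (rwMatrix G i j * v j))] at this
    rw [Finset.sum_sub_distrib, ← Finset.mul_sum] at this
    simp only [ite_mul, one_mul, zero_mul, Finset.sum_ite_eq, Finset.mem_univ,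
      if_true] at this
    linarith
  have hS : |∑ j, rwMatrix G i j * v j| ≤ |v i| := by
    calc |∑ j, rwMatrix G i j * v j| ≤ ∑ j, |rwMatrix G i j * v j| :=
          Finset.abs_sum_le_sum_abs _ _
      _ ≤ ∑ j, rwMatrix G i j * |v i| := by
          apply Finset.sum_le_sum
          intro j _
          rw [abs_mul, abs_of_nonneg (rw_nonneg G i j)]
          exact mul_le_mul_of_nonneg_left (hi j (Finset.mem_univ j)) (rw_nonneg G i j)
      _ = |v i| := by rw [← Finset.sum_mul, rw_rowsum G hdeg i, one_mul]
  have hbound : |v i| ≤ (1 - α i) * |v i| := by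
    have h1 : |1 - α i| = 1 - α i := abs_of_nonneg (by linarith [hα1 i])
    calc |v i| = |(1 - α i) * ∑ j, rwMatrix G i j * v j| := by rw [← hexp]
      _ = (1 - α i) * |∑ j, rwMatrix G i j * v j| := by rw [abs_mul, h1]
      _ ≤ (1 - α i) * |v i| :=
          mul_le_mul_of_nonneg_left hS (by linarith [hα1 i])
  nlinarith [hα0 i]

/-- Cramer's rule expression of `totalOpinion`. -/
lemma totalOpinion_ratio (s α : Fin n → ℝ) (hdet : (Mmat G α).det ≠ 0) :
    totalOpinion G s α
      = (∑ j, Matrix.cramer (Mmat G α) (Matrix.diagonal α *ᵥ s) j) / (Mmat G α).det := by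
  set M := Mmat G α
  set b := Matrix.diagonal α *ᵥ s
  have hu : IsUnit M.det := isUnit_iff_ne_zero.mpr hdet
  have h1 : M *ᵥ Matrix.cramer M b = M.det • b := Matrix.mulVec_cramer M b
  have h2 : M⁻¹ *ᵥ (M *ᵥ Matrix.cramer M b) = Matrix.cramer M b := by
    rw [Matrix.mulVec_mulVec, Matrix.nonsing_inv_mul M hu, Matrix.one_mulVec]
  rw [h1, Matrix.mulVec_smul] at h2
  have h3 : M⁻¹ *ᵥ b = (M.det)⁻¹ • Matrix.cramer M b := by
    rw [← h2, smul_smul, inv_mul_cancel₀ hdet, one_smul]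
  rw [totalOpinion_eq]
  change ∑ i, (M⁻¹ *ᵥ b) i = _
  simp only [h3, Pi.smul_apply, smul_eq_mul]
  rw [← Finset.mul_sum, div_eq_inv_mul]

/-- When only coordinate `i` of `α` varies, numerator and denominator are affine. -/
lemma affine_in_coord (s α : Fin n → ℝ) (i : Fin n) :
    ∃ a b c d : ℝ, ∀ t : ℝ,
      (Mmat G (Function.update α i t)).det = c + d * t ∧
      (∑ j, Matrix.cramer (Mmat G (Function.update α i t))
          (Matrix.diagonal (Function.update α i t) *ᵥ s) j) = a + b * t := by
  classical
  set P := rwMatrix G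
  set r : Fin n → ℝ := fun j => (if i = j then (1:ℝ) else 0) - P i j with hr
  set w : Fin n → ℝ := fun j => P i j with hw
  have hMkey : ∀ t, Mmat G (Function.update α i t)
      = Matrix.updateRow (Mmat G α) i (fun j => r j + t * w j) := by
    intro t
    ext a b
    by_cases hai : a = i
    · subst hai
      rw [Matrix.updateRow_self, Mmat_apply]
      simp only [Function.update_self, hr, hw]
      ring
    · rw [Matrix.updateRow_ne hai, Mmat_apply, Mmat_apply]
      rw [Function.update_of_ne hai]
  -- denominator
  set c := (Matrix.updateRow (Mmat G α) i r).det with hc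
  set d := (Matrix.updateRow (Mmat G α) i w).det with hd
  have hden : ∀ t, (Mmat G (Function.update α i t)).det = c + d * t := by
    intro t
    rw [hMkey t]
    have : (fun j => r j + t * w j) = r + t • w := by
      funext j; simp [Pi.add_apply, Pi.smul_apply, smul_eq_mul]
    rw [this, Matrix.det_updateRow_add, Matrix.det_updateRow_smul]
    ring
  -- numerator
  set vα : Fin n → ℝ := fun k => α k * s k with hvα
  have hvec : ∀ t k, (Matrix.diagonal (Function.update α i t) *ᵥ s) k
      = (Function.update α i t k) * s k := by
    intro t k
    rw [Matrix.mulVec_diagonal]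
  set p : Fin n → Fin n → ℝ := fun j k => if k = j then 0 else r k with hp
  set q : Fin n → Fin n → ℝ := fun j k => if k = j then s i else w k with hq
  set C : Fin n → Matrix (Fin n) (Fin n) ℝ :=
    fun j => (Mmat G α).updateCol j vα with hC
  have hBkey : ∀ t j, (Mmat G (Function.update α i t)).updateCol j
        (Matrix.diagonal (Function.update α i t) *ᵥ s)
      = Matrix.updateRow (C j) i (fun k => p j k + t * q j k) := by
    intro t j
    ext a k
    by_cases hai : a = i
    · subst hai
      rw [Matrix.updateRow_self]
      by_cases hkj : k = j
      · subst hkj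
        rw [Matrix.updateCol_self, hvec]
        simp [hp, hq, Function.update_self]
      · rw [Matrix.updateCol_ne hkj]
        simp only [hp, hq, if_neg hkj]
        rw [hMkey t, Matrix.updateRow_self]
    · rw [Matrix.updateRow_ne hai]
      by_cases hkj : k = j
      · subst hkj
        rw [Matrix.updateCol_self, hvec, hC]
        simp only [Matrix.updateCol_self, hvα]
        rw [Function.update_of_ne hai]
      · rw [Matrix.updateCol_ne hkj, hC]
        simp only [Matrix.updateCol_ne hkj]
        rw [hMkey t, Matrix.updateRow_ne hai]
  set a := ∑ j, (Matrix.updateRow (C j) i (p j)).det with ha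
  set b := ∑ j, (Matrix.updateRow (C j) i (q j)).det with hb
  refine ⟨a, b, c, d, fun t => ⟨hden t, ?_⟩⟩
  have : ∀ j : Fin n, Matrix.cramer (Mmat G (Function.update α i t))
      (Matrix.diagonal (Function.update α i t) *ᵥ s) j
      = (Matrix.updateRow (C j) i (p j)).det + t * (Matrix.updateRow (C j) i (q j)).det := by
    intro j
    rw [Matrix.cramer_apply, hBkey t j]
    have : (fun k => p j k + t * q j k) = p j + t • q j := by
      funext k; simp [Pi.add_apply, Pi.smul_apply, smul_eq_mul]
    rw [this, Matrix.det_updateRow_add, Matrix.det_updateRow_smul]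
  rw [Finset.sum_congr rfl (fun j _ => this j), Finset.sum_add_distrib, ← Finset.mul_sum]
  ring

/-- A linear-fractional function with nonvanishing denominator on `[ℓ,u]` is
bounded by its values at the endpoints. -/
lemma frac_le_max (a b c d ℓ u : ℝ) (hlu : ℓ ≤ u)
    (hD : ∀ t ∈ Set.Icc ℓ u, c + d * t ≠ 0) :
    ∀ t ∈ Set.Icc ℓ u, (a + b * t) / (c + d * t)
      ≤ max ((a + b * ℓ) / (c + d * ℓ)) ((a + b * u) / (c + d * u)) := by
  have hsign : ∀ x ∈ Set.Icc ℓ u, ∀ y ∈ Set.Icc ℓ u, 0 < (c + d * x) * (c + d * y) := by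
    intro x hx y hy
    rcases lt_or_gt_of_ne (hD x hx) with hxneg | hxpos
    · rcases lt_or_gt_of_ne (hD y hy) with hyneg | hypos
      · exact mul_pos_of_neg_of_neg hxneg hyneg
      · exfalso
        have hcont : ContinuousOn (fun t => c + d * t) (Set.uIcc x y) := by
          apply Continuous.continuousOn; continuity
        have h0 : (0 : ℝ) ∈ Set.uIcc (c + d * x) (c + d * y) :=
          Set.mem_uIcc.mpr (Or.inl ⟨le_of_lt hxneg, le_of_lt hypos⟩)
        obtain ⟨z, hz, hz0⟩ := intermediate_value_uIcc hcont h0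
        have hzmem : z ∈ Set.Icc ℓ u := by
          have : Set.uIcc x y ⊆ Set.Icc ℓ u := Set.uIcc_subset_Icc hx hy
          exact this hz
        exact hD z hzmem hz0
    · rcases lt_or_gt_of_ne (hD y hy) with hyneg | hypos
      · exfalso
        have hcont : ContinuousOn (fun t => c + d * t) (Set.uIcc x y) := by
          apply Continuous.continuousOn; continuity
        have h0 : (0 : ℝ) ∈ Set.uIcc (c + d * x) (c + d * y) :=
          Set.mem_uIcc.mpr (Or.inr ⟨le_of_lt hyneg, le_of_lt hxpos⟩)
        obtain ⟨z, hz, hz0⟩ := intermediate_value_uIcc hcont h0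
        have hzmem : z ∈ Set.Icc ℓ u := by
          have : Set.uIcc x y ⊆ Set.Icc ℓ u := Set.uIcc_subset_Icc hx hy
          exact this hz
        exact hD z hzmem hz0
      · exact mul_pos hxpos hypos
  intro t ht
  have hl : ℓ ∈ Set.Icc ℓ u := ⟨le_refl ℓ, hlu⟩
  have hu' : u ∈ Set.Icc ℓ u := ⟨hlu, le_refl u⟩
  rcases le_or_gt 0 (b * c - a * d) with hbc | hbc
  · -- increasing direction: value at u dominates
    refine le_trans ?_ (le_max_right _ _)
    have hid : (a + b * u) / (c + d * u) - (a + b * t) / (c + d * t)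
        = ((b * c - a * d) * (u - t)) / ((c + d * u) * (c + d * t)) := by
      have h1 := hD u hu'
      have h2 := hD t ht
      rw [div_sub_div _ _ h1 h2]; congr 1
      ring
    have hnum : 0 ≤ (b * c - a * d) * (u - t) :=
      mul_nonneg hbc (by linarith [ht.2])
    have := div_nonneg hnum (le_of_lt (hsign u hu' t ht))
    linarith [hid ▸ this]
  · -- decreasing direction: value at ℓ dominates
    refine le_trans ?_ (le_max_left _ _)
    have hid : (a + b * ℓ) / (c + d * ℓ) - (a + b * t) / (c + d * t)
        = ((b * c - a * d) * (ℓ - t)) / ((c + d * ℓ) * (c + d * t)) := by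
      have h1 := hD ℓ hl
      have h2 := hD t ht
      rw [div_sub_div _ _ h1 h2]; congr 1
      ring
    have hnum : 0 ≤ (b * c - a * d) * (ℓ - t) :=
      by nlinarith [ht.1]
    have := div_nonneg hnum (le_of_lt (hsign ℓ hl t ht))
    linarith [hid ▸ this]

/-- Pushing one coordinate to an extreme value cannot decrease `totalOpinion`. -/
lemma push_coord (hdeg : ∀ v, 0 < G.degree v) (s : Fin n → ℝ)
    (ℓ u : ℝ) (hℓ : 0 < ℓ) (hℓu : ℓ ≤ u) (hu : u ≤ 1)
    (α : Fin n → ℝ) (hα : ∀ j, α j ∈ Set.Icc ℓ u) (i : Fin n) :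
    ∃ t' : ℝ, (t' = ℓ ∨ t' = u) ∧
      totalOpinion G s α ≤ totalOpinion G s (Function.update α i t') := by
  obtain ⟨a, b, c, d, habcd⟩ := affine_in_coord G s α i
  have hbox : ∀ t ∈ Set.Icc ℓ u, ∀ j, 0 < Function.update α i t j ∧
      Function.update α i t j ≤ 1 := by
    intro t ht j
    by_cases hji : j = i
    · subst hji; rw [Function.update_self]
      exact ⟨lt_of_lt_of_le hℓ ht.1, le_trans ht.2 hu⟩
    · rw [Function.update_of_ne hji]
      exact ⟨lt_of_lt_of_le hℓ (hα j).1, le_trans (hα j).2 hu⟩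
  have hD : ∀ t ∈ Set.Icc ℓ u, c + d * t ≠ 0 := by
    intro t ht
    rw [← (habcd t).1]
    exact det_ne_zero G hdeg _ (fun j => (hbox t ht j).1) (fun j => (hbox t ht j).2)
  have hf : ∀ t ∈ Set.Icc ℓ u,
      totalOpinion G s (Function.update α i t) = (a + b * t) / (c + d * t) := by
    intro t ht
    have hdet : (Mmat G (Function.update α i t)).det ≠ 0 :=
      det_ne_zero G hdeg _ (fun j => (hbox t ht j).1) (fun j => (hbox t ht j).2)
    rw [totalOpinion_ratio G s _ hdet, (habcd t).1, (habcd t).2]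
  have hl : ℓ ∈ Set.Icc ℓ u := ⟨le_refl ℓ, hℓu⟩
  have hu' : u ∈ Set.Icc ℓ u := ⟨hℓu, le_refl u⟩
  have hαi : α i ∈ Set.Icc ℓ u := hα i
  have hmax := frac_le_max a b c d ℓ u hℓu hD (α i) hαi
  have hself : Function.update α i (α i) = α := Function.update_eq_self i α
  have hfα : totalOpinion G s α = (a + b * α i) / (c + d * α i) := by
    have h := hf (α i) hαi
    rwa [hself] at h
  rcases le_max_iff.mp hmax with hcase | hcase
  · refine ⟨ℓ, Or.inl rfl, ?_⟩
    rw [hf ℓ hl, hfα]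
    exact hcase
  · refine ⟨u, Or.inr rfl, ?_⟩
    rw [hf u hu', hfα]
    exact hcase

end OpinionAux

theorem opinion_maximization_extreme_values
    {n : ℕ} (G : SimpleGraph (Fin n)) [DecidableRel G.Adj]
    (hdeg : ∀ v, 0 < G.degree v)
    (s : Fin n → ℝ) (hs : ∀ i, s i ∈ Set.Icc (0 : ℝ) 1)
    (ℓ u : ℝ) (hℓ : 0 < ℓ) (hℓu : ℓ ≤ u) (hu : u ≤ 1) :
    ∃ αstar : Fin n → ℝ, (∀ i, αstar i = ℓ ∨ αstar i = u) ∧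
      ∀ α : Fin n → ℝ, (∀ i, α i ∈ Set.Icc ℓ u) →
        totalOpinion G s α ≤ totalOpinion G s αstar := by
  classical
  obtain ⟨b0, _, hb0⟩ := Finset.exists_max_image (Finset.univ : Finset (Fin n → Bool))
    (fun b => totalOpinion G s (fun i => if b i then u else ℓ)) Finset.univ_nonempty
  set αstar : Fin n → ℝ := fun i => if b0 i then u else ℓ with hαstar
  refine ⟨αstar, fun i => by by_cases h : b0 i <;> simp [hαstar, h], ?_⟩
  -- induction on the number of non-extreme coordinates
  have key : ∀ k : ℕ, ∀ α : Fin n → ℝ, (∀ i, α i ∈ Set.Icc ℓ u) →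
      (Finset.univ.filter (fun i => α i ≠ ℓ ∧ α i ≠ u)).card ≤ k →
      totalOpinion G s α ≤ totalOpinion G s αstar := by
    intro k
    induction k with
    | zero =>
      intro α hα hcard
      have hext : ∀ i, α i = ℓ ∨ α i = u := by
        intro i
        by_contra hcon
        push_neg at hcon
        have : i ∈ Finset.univ.filter (fun i => α i ≠ ℓ ∧ α i ≠ u) := by
          simp [hcon.1, hcon.2]
        have := Finset.card_pos.mpr ⟨i, this⟩
        omega
      set b : Fin n → Bool := fun i => if α i = u then true else false with hb
      have hαb : α = fun i => if b i then u else ℓ := by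
        funext i
        rcases hext i with h | h
        · by_cases hiu : α i = u
          · simp [hb, hiu]
          · have hlu2 : ℓ ≠ u := h ▸ hiu
            simp [hb, h, hiu, hlu2]
        · simp [hb, h]
      rw [hαb]
      exact hb0 b (Finset.mem_univ b)
    | succ k ih =>
      intro α hα hcard
      by_cases hne : (Finset.univ.filter (fun i => α i ≠ ℓ ∧ α i ≠ u)).Nonempty
      · obtain ⟨i, hi⟩ := hne
        rw [Finset.mem_filter] at hi
        obtain ⟨t', ht', hle⟩ := OpinionAux.push_coord G hdeg s ℓ u hℓ hℓu hu α hα i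
        have hbox' : ∀ j, Function.update α i t' j ∈ Set.Icc ℓ u := by
          intro j
          by_cases hji : j = i
          · subst hji; rw [Function.update_self]
            rcases ht' with h | h <;> rw [h]
            · exact ⟨le_refl ℓ, hℓu⟩
            · exact ⟨hℓu, le_refl u⟩
          · rw [Function.update_of_ne hji]; exact hα j
        have hsub : (Finset.univ.filter (fun j => Function.update α i t' j ≠ ℓ ∧
              Function.update α i t' j ≠ u))
            ⊆ (Finset.univ.filter (fun j => α j ≠ ℓ ∧ α j ≠ u)).erase i := by
          intro j hj
          rw [Finset.mem_filter] at hj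
          have hji : j ≠ i := by
            intro hcon
            subst hcon
            rw [Function.update_self] at hj
            rcases ht' with h | h
            · exact hj.2.1 h
            · exact hj.2.2 h
          rw [Function.update_of_ne hji] at hj
          exact Finset.mem_erase.mpr ⟨hji, Finset.mem_filter.mpr ⟨Finset.mem_univ j, hj.2⟩⟩
        have hcard' : (Finset.univ.filter (fun j => Function.update α i t' j ≠ ℓ ∧
              Function.update α i t' j ≠ u)).card ≤ k := by
          have h1 := Finset.card_le_card hsub
          have h2 : i ∈ Finset.univ.filter (fun j => α j ≠ ℓ ∧ α j ≠ u) :=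
            Finset.mem_filter.mpr ⟨Finset.mem_univ i, hi.2⟩
          have h3 := Finset.card_erase_of_mem h2
          omega
        exact le_trans hle (ih (Function.update α i t') hbox' hcard')
      · rw [Finset.not_nonempty_iff_eq_empty] at hne
        apply ih α hα
        rw [hne]
        simp
  intro α hα
  exact key (Finset.univ.filter (fun i => α i ≠ ℓ ∧ α i ≠ u)).card α hα le_rfl
end

section
/- Let G be a finite simple undirected graph on n vertices in which every vertex has degree at least 1, with random-walk matrix P, let s ∈ [0,1]^n, and let ℓ, u be reals with 0 < ℓ ≤ u ≤ 1. For α ∈ [ℓ,u]^n write A = diag(α) and f(s,α) = 1ᵀ (I − (I−A)P)⁻¹ A s (the total sum of equilibrium opinions). Then there exists a vector α* ∈ [ℓ,u]^n with α*_i ∈ {ℓ, u} for every i such that f(s,α*) ≤ f(s,α) for every α ∈ [ℓ,u]^n; that is, the opinion minimization problem always has an optimal solution in which every resistance parameter takes one of the two extreme values ℓ or u. -/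
open Matrix BigOperators

section Aux

variable {n : ℕ} (G : SimpleGraph (Fin n)) [DecidableRel G.Adj]

lemma rw_nonneg (i j : Fin n) : 0 ≤ rwMatrix G i j := by
  unfold rwMatrix; split_ifs <;> positivity

lemma rw_rowsum (hdeg : ∀ v, 0 < G.degree v) (k : Fin n) : ∑ j, rwMatrix G k j = 1 := by
  unfold rwMatrix
  rw [Finset.sum_ite, Finset.sum_const_zero, add_zero, Finset.sum_const,
    ← SimpleGraph.neighborFinset_eq_filter, SimpleGraph.card_neighborFinset_eq_degree]
  have : (G.degree k : ℝ) ≠ 0 := Nat.cast_ne_zero.mpr (hdeg k).ne'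
  rw [nsmul_eq_mul]
  field_simp

lemma M_apply (v : Fin n → ℝ) (k j : Fin n) :
    (1 - (1 - Matrix.diagonal v) * rwMatrix G) k j
      = (if k = j then 1 else 0) - (1 - v k) * rwMatrix G k j := by
  have h1 : (1 : Matrix (Fin n) (Fin n) ℝ) - Matrix.diagonal v
      = Matrix.diagonal (fun x => 1 - v x) := by
    rw [← Matrix.diagonal_one, Matrix.diagonal_sub]
  rw [Matrix.sub_apply, h1, Matrix.diagonal_mul, Matrix.one_apply]

lemma det_ne (hdeg : ∀ v, 0 < G.degree v) (v : Fin n → ℝ)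
    (h0 : ∀ k, 0 < v k) (h1 : ∀ k, v k ≤ 1) :
    (1 - (1 - Matrix.diagonal v) * rwMatrix G).det ≠ 0 := by
  intro hdet
  obtain ⟨x, hx0, hx⟩ := Matrix.exists_mulVec_eq_zero_iff.mpr hdet
  obtain ⟨k, -, hk⟩ := Finset.exists_max_image Finset.univ (fun k => |x k|)
    (Finset.univ_nonempty_iff.mpr (by
      obtain ⟨j, hj⟩ := Function.ne_iff.mp hx0
      exact ⟨j⟩))
  have hkpos : 0 < |x k| := by
    obtain ⟨j, hj⟩ := Function.ne_iff.mp hx0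
    exact lt_of_lt_of_le (abs_pos.mpr hj) (hk j (Finset.mem_univ j))
  have hMx : ∀ m, ((1 - (1 - Matrix.diagonal v) * rwMatrix G) *ᵥ x) m
      = x m - (1 - v m) * ∑ j, rwMatrix G m j * x j := by
    intro m
    rw [Matrix.mulVec, dotProduct]
    simp_rw [M_apply G v, sub_mul, Finset.sum_sub_distrib, ite_mul, one_mul, zero_mul,
      Finset.sum_ite_eq, if_pos (Finset.mem_univ m), mul_assoc, ← Finset.mul_sum]
  have hker := congrFun hx k
  rw [hMx k] at hker
  have hxk : x k = (1 - v k) * ∑ j, rwMatrix G k j * x j := by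
    have : x k - (1 - v k) * ∑ j, rwMatrix G k j * x j = 0 := hker
    linarith
  have habs : |x k| ≤ (1 - v k) * |x k| := by
    have h1vk : 0 ≤ 1 - v k := by linarith [h1 k]
    conv_lhs => rw [hxk]
    rw [abs_mul, abs_of_nonneg h1vk]
    refine mul_le_mul_of_nonneg_left ?_ h1vk
    calc |∑ j, rwMatrix G k j * x j| ≤ ∑ j, |rwMatrix G k j * x j| :=
          Finset.abs_sum_le_sum_abs _ _
      _ ≤ ∑ j, rwMatrix G k j * |x k| := by
          refine Finset.sum_le_sum fun j _ => ?_
          rw [abs_mul, abs_of_nonneg (rw_nonneg G k j)]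
          exact mul_le_mul_of_nonneg_left (hk j (Finset.mem_univ j)) (rw_nonneg G k j)
      _ = |x k| := by rw [← Finset.sum_mul, rw_rowsum G hdeg k, one_mul]
  nlinarith [h0 k, hkpos]

lemma frac_min (a b c d ℓ u : ℝ) (hℓu : ℓ ≤ u)
    (hD : ∀ t ∈ Set.Icc ℓ u, c + d * t ≠ 0) (t : ℝ) (ht : t ∈ Set.Icc ℓ u) :
    (a + b * ℓ) / (c + d * ℓ) ≤ (a + b * t) / (c + d * t) ∨
      (a + b * u) / (c + d * u) ≤ (a + b * t) / (c + d * t) := by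
  have hmem_l : ℓ ∈ Set.Icc ℓ u := ⟨le_refl _, hℓu⟩
  have hmem_u : u ∈ Set.Icc ℓ u := ⟨hℓu, le_refl _⟩
  have pos : ∀ x ∈ Set.Icc ℓ u, ∀ y ∈ Set.Icc ℓ u, 0 < (c + d * x) * (c + d * y) := by
    intro x hx y hy
    rcases lt_trichotomy ((c + d * x) * (c + d * y)) 0 with hneg | hz | hpos
    · exfalso
      have hcont : ContinuousOn (fun z => c + d * z) (Set.uIcc x y) := by
        fun_prop
      have h0mem : (0 : ℝ) ∈ Set.uIcc (c + d * x) (c + d * y) := by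
        rcases mul_neg_iff.mp hneg with ⟨h1, h2⟩ | ⟨h1, h2⟩
        · exact Set.mem_uIcc.mpr (Or.inr ⟨le_of_lt h2, le_of_lt h1⟩)
        · exact Set.mem_uIcc.mpr (Or.inl ⟨le_of_lt h1, le_of_lt h2⟩)
      obtain ⟨z, hz1, hz2⟩ := intermediate_value_uIcc hcont h0mem
      have hzmem : z ∈ Set.Icc ℓ u := by
        have : Set.uIcc x y ⊆ Set.Icc ℓ u := Set.uIcc_subset_Icc hx hy
        exact this hz1
      exact hD z hzmem (by simpa using hz2)
    · exfalso
      rcases mul_eq_zero.mp hz with h | h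
      · exact hD x hx h
      · exact hD y hy h
    · exact hpos
  rcases le_or_gt 0 (b * c - a * d) with hK | hK
  · left
    have key : (a + b * t) / (c + d * t) - (a + b * ℓ) / (c + d * ℓ)
        = ((b * c - a * d) * (t - ℓ)) / ((c + d * t) * (c + d * ℓ)) := by
      rw [div_sub_div _ _ (hD t ht) (hD ℓ hmem_l)]; congr 1
      ring
    have : 0 ≤ ((b * c - a * d) * (t - ℓ)) / ((c + d * t) * (c + d * ℓ)) :=
      div_nonneg (mul_nonneg hK (by linarith [ht.1])) (le_of_lt (pos t ht ℓ hmem_l))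
    linarith [key ▸ this]
  · right
    have key : (a + b * t) / (c + d * t) - (a + b * u) / (c + d * u)
        = ((b * c - a * d) * (t - u)) / ((c + d * t) * (c + d * u)) := by
      rw [div_sub_div _ _ (hD t ht) (hD u hmem_u)]; congr 1
      ring
    have : 0 ≤ ((b * c - a * d) * (t - u)) / ((c + d * t) * (c + d * u)) :=
      div_nonneg (by nlinarith [ht.2]) (le_of_lt (pos t ht u hmem_u))
    linarith [key ▸ this]

lemma det_updateRow_finset_sum {ι : Type*} (M : Matrix (Fin n) (Fin n) ℝ) (k : Fin n)
    (S : Finset ι) (v : ι → Fin n → ℝ) :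
    (M.updateRow k (∑ l ∈ S, v l)).det = ∑ l ∈ S, (M.updateRow k (v l)).det := by
  classical
  induction S using Finset.induction_on with
  | empty =>
      simp only [Finset.sum_empty]
      exact Matrix.det_eq_zero_of_row_eq_zero k (fun j => by simp)
  | insert _ _ hnot ih =>
      rw [Finset.sum_insert hnot, Matrix.det_updateRow_add, ih, Finset.sum_insert hnot]

lemma sum_adjugate_col (M : Matrix (Fin n) (Fin n) ℝ) (k : Fin n) :
    ∑ l, M.adjugate l k = (M.updateRow k (fun _ => 1)).det := by
  simp_rw [Matrix.adjugate_apply]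
  rw [← det_updateRow_finset_sum M k Finset.univ (fun l => Pi.single l 1)]
  congr 1
  ext j
  simp [Finset.univ_sum_single (fun _ => (1:ℝ))]

lemma total_eq (s v : Fin n → ℝ) :
    totalOpinion G s v
      = (∑ k, (v k * s k) *
          ((1 - (1 - Matrix.diagonal v) * rwMatrix G).updateRow k (fun _ => 1)).det)
        / (1 - (1 - Matrix.diagonal v) * rwMatrix G).det := by
  set M := 1 - (1 - Matrix.diagonal v) * rwMatrix G with hM
  have hb : ∀ k, (Matrix.diagonal v *ᵥ s) k = v k * s k := by
    intro k
    rw [Matrix.mulVec, diagonal_dotProduct]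
  unfold totalOpinion
  rw [← hM, Matrix.inv_def, Ring.inverse_eq_inv']
  simp_rw [Matrix.smul_mulVec, Pi.smul_apply, smul_eq_mul, ← Finset.mul_sum]
  rw [div_eq_inv_mul]
  congr 1
  simp_rw [Matrix.mulVec, dotProduct, hb]
  rw [Finset.sum_comm]
  refine Finset.sum_congr rfl fun k _ => ?_
  rw [← Finset.sum_mul, sum_adjugate_col, mul_comm]

lemma updateRow_comm' (C : Matrix (Fin n) (Fin n) ℝ) {i k : Fin n} (h : i ≠ k)
    (r w : Fin n → ℝ) :
    (C.updateRow i r).updateRow k w = (C.updateRow k w).updateRow i r := by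
  ext a b
  rcases eq_or_ne a k with rfl | hak
  · rw [Matrix.updateRow_self, Matrix.updateRow_ne (Ne.symm h), Matrix.updateRow_self]
  · rcases eq_or_ne a i with rfl | hai
    · rw [Matrix.updateRow_ne hak, Matrix.updateRow_self, Matrix.updateRow_self]
    · rw [Matrix.updateRow_ne hak, Matrix.updateRow_ne hai, Matrix.updateRow_ne hai,
        Matrix.updateRow_ne hak]

lemma updateRow_twice (A : Matrix (Fin n) (Fin n) ℝ) (i : Fin n) (u v : Fin n → ℝ) :
    (A.updateRow i u).updateRow i v = A.updateRow i v := by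
  ext k j
  rcases eq_or_ne k i with rfl | h
  · rw [Matrix.updateRow_self, Matrix.updateRow_self]
  · rw [Matrix.updateRow_ne h, Matrix.updateRow_ne h, Matrix.updateRow_ne h]

lemma coord (hdeg : ∀ v, 0 < G.degree v) (s : Fin n → ℝ) (ℓ u : ℝ)
    (hℓ : 0 < ℓ) (hℓu : ℓ ≤ u) (hu : u ≤ 1)
    (α : Fin n → ℝ) (hα : ∀ j, α j ∈ Set.Icc ℓ u) (i : Fin n) :
    ∃ t, (t = ℓ ∨ t = u) ∧
      totalOpinion G s (Function.update α i t) ≤ totalOpinion G s α := by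
  classical
  set C := 1 - (1 - Matrix.diagonal α) * rwMatrix G with hC
  set r0 : Fin n → ℝ := fun j => (if i = j then 1 else 0) - rwMatrix G i j with hr0
  set r1 : Fin n → ℝ := rwMatrix G i with hr1
  set w : Fin n → ℝ := fun _ => 1 with hw
  have hbox : ∀ t ∈ Set.Icc ℓ u, ∀ k, Function.update α i t k ∈ Set.Icc ℓ u := by
    intro t ht k
    rcases eq_or_ne k i with rfl | hk
    · rw [Function.update_self]; exact ht
    · rw [Function.update_of_ne hk t α]; exact hα k
  have hpos : ∀ t ∈ Set.Icc ℓ u, ∀ k, 0 < Function.update α i t k :=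
    fun t ht k => lt_of_lt_of_le hℓ (hbox t ht k).1
  have hle1 : ∀ t ∈ Set.Icc ℓ u, ∀ k, Function.update α i t k ≤ 1 :=
    fun t ht k => le_trans (hbox t ht k).2 hu
  -- the matrix as a one-row update
  have hMt : ∀ t : ℝ, 1 - (1 - Matrix.diagonal (Function.update α i t)) * rwMatrix G
      = C.updateRow i (r0 + t • r1) := by
    intro t
    ext k j
    rw [M_apply]
    rcases eq_or_ne k i with rfl | hk
    · rw [Matrix.updateRow_self, Function.update_self]
      simp only [hr0, hr1, Pi.add_apply, Pi.smul_apply, smul_eq_mul]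
      split_ifs with h <;> ring
    · rw [Matrix.updateRow_ne hk, hC, M_apply, Function.update_of_ne hk t α]
  -- determinant is affine
  set cc : ℝ := (C.updateRow i r0).det with hcc
  set dd : ℝ := (C.updateRow i r1).det with hdd
  have hdet : ∀ t : ℝ,
      (1 - (1 - Matrix.diagonal (Function.update α i t)) * rwMatrix G).det
        = cc + dd * t := by
    intro t
    rw [hMt t, Matrix.det_updateRow_add, Matrix.det_updateRow_smul]
    ring
  -- numerator is affine
  set Ac : Fin n → ℝ := fun k => if k = i then 0 else
    (α k * s k) * (((C.updateRow k w).updateRow i r0).det) with hAc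
  set Bc : Fin n → ℝ := fun k => if k = i then s i * ((C.updateRow i w).det) else
    (α k * s k) * (((C.updateRow k w).updateRow i r1).det) with hBc
  have hnum : ∀ t : ℝ,
      (∑ k, ((Function.update α i t k) * s k) *
        ((1 - (1 - Matrix.diagonal (Function.update α i t)) * rwMatrix G).updateRow k w).det)
      = (∑ k, Ac k) + (∑ k, Bc k) * t := by
    intro t
    rw [Finset.sum_mul, ← Finset.sum_add_distrib]
    refine Finset.sum_congr rfl fun k _ => ?_
    rw [hMt t]
    rcases eq_or_ne k i with rfl | hk
    · rw [Function.update_self, updateRow_twice]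
      simp only [hAc, hBc, if_pos rfl]
      ring
    · rw [Function.update_of_ne hk t α,
        updateRow_comm' C (fun h => hk (h.symm)) (r0 + t • r1) w,
        Matrix.det_updateRow_add, Matrix.det_updateRow_smul]
      simp only [hAc, hBc, if_neg hk]
      ring
  -- the value as a linear-fractional function
  have hg : ∀ t ∈ Set.Icc ℓ u, totalOpinion G s (Function.update α i t)
      = ((∑ k, Ac k) + (∑ k, Bc k) * t) / (cc + dd * t) := by
    intro t ht
    rw [total_eq, hnum t, hdet t]
  have hDne : ∀ t ∈ Set.Icc ℓ u, cc + dd * t ≠ 0 := by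
    intro t ht
    rw [← hdet t]
    exact det_ne G hdeg _ (hpos t ht) (hle1 t ht)
  have hmem : α i ∈ Set.Icc ℓ u := hα i
  have hself : Function.update α i (α i) = α := Function.update_eq_self i α
  have := frac_min (∑ k, Ac k) (∑ k, Bc k) cc dd ℓ u hℓu hDne (α i) hmem
  rcases this with h | h
  · refine ⟨ℓ, Or.inl rfl, ?_⟩
    rw [hg ℓ ⟨le_refl _, hℓu⟩]
    calc _ ≤ ((∑ k, Ac k) + (∑ k, Bc k) * α i) / (cc + dd * α i) := h
      _ = totalOpinion G s α := by rw [← hg (α i) hmem, hself]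
  · refine ⟨u, Or.inr rfl, ?_⟩
    rw [hg u ⟨hℓu, le_refl _⟩]
    calc _ ≤ ((∑ k, Ac k) + (∑ k, Bc k) * α i) / (cc + dd * α i) := h
      _ = totalOpinion G s α := by rw [← hg (α i) hmem, hself]

lemma push (hdeg : ∀ v, 0 < G.degree v) (s : Fin n → ℝ) (ℓ u : ℝ)
    (hℓ : 0 < ℓ) (hℓu : ℓ ≤ u) (hu : u ≤ 1) (T : Finset (Fin n)) :
    ∀ α : Fin n → ℝ, (∀ j, α j ∈ Set.Icc ℓ u) →
      ∃ β : Fin n → ℝ, (∀ j, β j ∈ Set.Icc ℓ u) ∧ (∀ j ∈ T, β j = ℓ ∨ β j = u) ∧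
        totalOpinion G s β ≤ totalOpinion G s α := by
  classical
  induction T using Finset.induction_on with
  | empty =>
      intro α hα
      exact ⟨α, hα, fun j hj => absurd hj (Finset.notMem_empty j), le_refl _⟩
  | @insert i T hnot ih =>
      intro α hα
      obtain ⟨β, hβbox, hβext, hβle⟩ := ih α hα
      obtain ⟨t, htval, htle⟩ := coord G hdeg s ℓ u hℓ hℓu hu β hβbox i
      refine ⟨Function.update β i t, ?_, ?_, le_trans htle hβle⟩
      · intro j
        rcases eq_or_ne j i with rfl | hj
        · rw [Function.update_self]
          rcases htval with rfl | rfl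
          · exact ⟨le_refl _, hℓu⟩
          · exact ⟨hℓu, le_refl _⟩
        · rw [Function.update_of_ne hj t β]; exact hβbox j
      · intro j hj
        rcases eq_or_ne j i with rfl | hj'
        · rw [Function.update_self]; exact htval
        · rw [Function.update_of_ne hj' t β]
          exact hβext j ((Finset.mem_insert.mp hj).resolve_left hj')

end Aux

theorem opinion_minimization_extreme_values
    {n : ℕ} (G : SimpleGraph (Fin n)) [DecidableRel G.Adj]
    (hdeg : ∀ v, 0 < G.degree v)
    (s : Fin n → ℝ) (hs : ∀ i, s i ∈ Set.Icc (0 : ℝ) 1)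
    (ℓ u : ℝ) (hℓ : 0 < ℓ) (hℓu : ℓ ≤ u) (hu : u ≤ 1) :
    ∃ αstar : Fin n → ℝ, (∀ i, αstar i = ℓ ∨ αstar i = u) ∧
      ∀ α : Fin n → ℝ, (∀ i, α i ∈ Set.Icc ℓ u) →
        totalOpinion G s αstar ≤ totalOpinion G s α := by
  classical
  set F : Finset (Fin n → ℝ) :=
    (Finset.univ : Finset (Fin n → Bool)).image (fun b i => if b i then u else ℓ) with hF
  have hFne : F.Nonempty :=
    ⟨_, Finset.mem_image_of_mem _ (Finset.mem_univ (fun _ => true))⟩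
  obtain ⟨αstar, hαmem, hαmin⟩ := Finset.exists_min_image F (totalOpinion G s) hFne
  refine ⟨αstar, ?_, ?_⟩
  · obtain ⟨b, -, rfl⟩ := Finset.mem_image.mp hαmem
    intro i
    by_cases hb : b i <;> simp [hb]
  · intro α hα
    obtain ⟨β, hβbox, hβext, hβle⟩ :=
      push G hdeg s ℓ u hℓ hℓu hu Finset.univ α hα
    have hβmem : β ∈ F := by
      refine Finset.mem_image.mpr
        ⟨fun i => if β i = u then true else false, Finset.mem_univ _, ?_⟩
      funext i
      by_cases hβu : β i = u
      · simp [hβu]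
      · have h : β i = ℓ := (hβext i (Finset.mem_univ i)).resolve_right hβu
        rw [h] at hβu
        simp [hβu, h]
    exact le_trans (hαmin β hβmem) hβle
end

section
/- Let G be a finite simple undirected graph on n vertices in which every vertex has degree at least 1, with random-walk matrix P, and let X be an n×n real diagonal matrix with X_{ii} > 1 for all i. Let R be the invertible diagonal matrix with R_{ii} = sqrt((X_{ii} − 1)/deg(i)). Then R⁻¹ (X − (X−I)P) R is a symmetric matrix; in particular the matrix Z = X − (X−I)P is similar to a symmetric matrix, and all eigenvalues of Z are real. -/
open Matrix BigOperators

theorem similar_to_symmetric_real_eigenvalues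
    {n : ℕ} (G : SimpleGraph (Fin n)) [DecidableRel G.Adj]
    (hdeg : ∀ v, 0 < G.degree v)
    (X : Matrix (Fin n) (Fin n) ℝ) (hX : X.IsDiag) (hX1 : ∀ i, 1 < X i i)
    (R : Matrix (Fin n) (Fin n) ℝ)
    (hR : R = Matrix.diagonal (fun i => Real.sqrt ((X i i - 1) / (G.degree i)))) :
    (R⁻¹ * (X - (X - 1) * rwMatrix G) * R).IsSymm ∧
    ∀ lam : ℂ, (∃ v : Fin n → ℂ, v ≠ 0 ∧
        ((X - (X - 1) * rwMatrix G).map (fun x : ℝ => (x : ℂ))) *ᵥ v = lam • v) →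
      lam.im = 0 := by
  set r : Fin n → ℝ := fun i => Real.sqrt ((X i i - 1) / (G.degree i)) with hr
  have hdpos : ∀ i, (0:ℝ) < (G.degree i : ℝ) := fun i => by exact_mod_cast hdeg i
  have hrpos : ∀ i, 0 < r i := fun i =>
    Real.sqrt_pos.2 (div_pos (by linarith [hX1 i]) (hdpos i))
  have hrsq : ∀ i, r i * r i = (X i i - 1) / (G.degree i) := fun i =>
    Real.mul_self_sqrt (le_of_lt (div_pos (by linarith [hX1 i]) (hdpos i)))
  have hRinv : R⁻¹ = Matrix.diagonal (fun i => (r i)⁻¹) := by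
    refine Matrix.inv_eq_left_inv ?_
    rw [hR, Matrix.diagonal_mul_diagonal, ← Matrix.diagonal_one]
    have hfun : (fun i => (r i)⁻¹ * r i) = fun _ => (1:ℝ) :=
      funext fun i => inv_mul_cancel₀ (hrpos i).ne'
    rw [hfun]
  set M : Matrix (Fin n) (Fin n) ℝ := X - (X - 1) * rwMatrix G with hM
  have hM1 : X - 1 = Matrix.diagonal (fun i => X i i - 1) := by
    ext i j
    by_cases h : i = j
    · subst h; simp
    · rw [Matrix.sub_apply, Matrix.diagonal_apply_ne _ h, Matrix.one_apply_ne h, hX h, sub_zero]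
  have hMentry : ∀ i j, M i j =
      (if i = j then X i i else 0) - (X i i - 1) * rwMatrix G i j := by
    intro i j
    rw [hM, Matrix.sub_apply, hM1, Matrix.diagonal_mul]
    congr 1
    by_cases h : i = j
    · subst h; simp
    · rw [if_neg h]; exact hX h
  -- entry formula for S := R⁻¹ * M * R
  have hSentry : ∀ i j, (R⁻¹ * M * R) i j =
      (if i = j then X i i else 0) + (if G.Adj i j then -(r i * r j) else 0) := by
    intro i j
    have hentry : (R⁻¹ * M * R) i j = (r i)⁻¹ * M i j * r j := by
      rw [hRinv, hR, Matrix.mul_diagonal, Matrix.diagonal_mul]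
    rw [hentry, hMentry]
    by_cases h : i = j
    · subst h
      have hP : rwMatrix G i i = 0 := if_neg (G.irrefl)
      rw [hP, mul_zero, sub_zero, if_pos rfl, if_neg (G.irrefl), add_zero]
      calc (r i)⁻¹ * X i i * r i = X i i * ((r i)⁻¹ * r i) := by ring
        _ = X i i := by rw [inv_mul_cancel₀ (hrpos i).ne', mul_one]
    · by_cases hadj : G.Adj i j
      · have hP : rwMatrix G i j = 1 / (G.degree i : ℝ) := if_pos hadj
        rw [hP, if_neg h, if_pos hadj]
        have key : (X i i - 1) * (1 / (G.degree i : ℝ)) = r i * r i := by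
          rw [hrsq i]
          field_simp
        rw [zero_sub, key]
        calc (r i)⁻¹ * -(r i * r i) * r j = -(((r i)⁻¹ * r i) * (r i * r j)) := by ring
          _ = 0 + -(r i * r j) := by rw [inv_mul_cancel₀ (hrpos i).ne']; ring
      · have hP : rwMatrix G i j = 0 := if_neg hadj
        rw [hP, if_neg h, if_neg hadj]
        ring
  have hsymm : (R⁻¹ * M * R).IsSymm := by
    refine Matrix.IsSymm.ext fun i j => ?_
    rw [hSentry, hSentry]
    by_cases h : i = j
    · subst h; rfl
    · rw [if_neg h, if_neg (Ne.symm h)]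
      by_cases hadj : G.Adj i j
      · rw [if_pos hadj, if_pos hadj.symm]
        ring
      · rw [if_neg hadj, if_neg (fun ha => hadj ha.symm)]
  refine ⟨hsymm, ?_⟩
  rintro lam ⟨v, hv, hev⟩
  have hRdet : IsUnit R.det := by
    rw [hR, Matrix.det_diagonal]
    exact (Finset.prod_pos (fun i _ => hrpos i)).ne'.isUnit
  have h1 : R * R⁻¹ = 1 := Matrix.mul_nonsing_inv _ hRdet
  set S := R⁻¹ * M * R with hS
  set Sc := S.map (fun x : ℝ => (x : ℂ)) with hSc
  set w : Fin n → ℂ := (R⁻¹.map (fun x : ℝ => (x : ℂ))) *ᵥ v with hw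
  have hmap : ∀ A B : Matrix (Fin n) (Fin n) ℝ,
      (A * B).map (fun x : ℝ => (x : ℂ)) =
      A.map (fun x : ℝ => (x : ℂ)) * B.map (fun x : ℝ => (x : ℂ)) := fun A B =>
    Matrix.map_mul (f := Complex.ofRealHom)
  have hmap1 : (1 : Matrix (Fin n) (Fin n) ℝ).map (fun x : ℝ => (x : ℂ)) = 1 :=
    Matrix.map_one _ (by simp) (by simp)
  have hRRinv : R.map (fun x : ℝ => (x : ℂ)) * R⁻¹.map (fun x : ℝ => (x : ℂ)) = 1 := by
    rw [← hmap, h1, hmap1]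
  have hw0 : w ≠ 0 := by
    intro h0
    apply hv
    have hvw : (R.map (fun x : ℝ => (x : ℂ))) *ᵥ w = v := by
      rw [hw, Matrix.mulVec_mulVec, hRRinv, Matrix.one_mulVec]
    rw [h0, Matrix.mulVec_zero] at hvw
    exact hvw.symm
  have heig : Sc *ᵥ w = lam • w := by
    have h3 : Sc * R⁻¹.map (fun x : ℝ => (x : ℂ)) =
        R⁻¹.map (fun x : ℝ => (x : ℂ)) * M.map (fun x : ℝ => (x : ℂ)) := by
      rw [hSc, hS, hmap, hmap, Matrix.mul_assoc
        (R⁻¹.map (fun x : ℝ => (x : ℂ)) * M.map (fun x : ℝ => (x : ℂ))), hRRinv, Matrix.mul_one]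
    rw [hw, Matrix.mulVec_mulVec, h3, ← Matrix.mulVec_mulVec, hev, Matrix.mulVec_smul]
  have hherm : Scᴴ = Sc := by
    ext i j
    rw [Matrix.conjTranspose_apply, hSc, Matrix.map_apply, Matrix.map_apply]
    have hs : S j i = S i j := hsymm.apply i j
    rw [show star ((S j i : ℝ) : ℂ) = ((S j i : ℝ) : ℂ) from Complex.conj_ofReal _, hs]
  set c : ℂ := star w ⬝ᵥ (Sc *ᵥ w) with hc
  have h4 : star c = star (Sc *ᵥ w) ⬝ᵥ w := by
    rw [hc, star_dotProduct, star_star]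
  have hcreal : star c = c := by
    rw [h4, Matrix.star_mulVec, hherm, ← Matrix.dotProduct_mulVec]
  set t : ℂ := star w ⬝ᵥ w with ht
  have htval : t = ((∑ i, Complex.normSq (w i) : ℝ) : ℂ) := by
    rw [ht]
    simp only [dotProduct, Pi.star_apply, Complex.star_def]
    push_cast
    refine Finset.sum_congr rfl fun i _ => ?_
    rw [mul_comm, Complex.mul_conj]
  obtain ⟨i0, hi0⟩ : ∃ i, w i ≠ 0 := Function.ne_iff.1 hw0
  have htre : 0 < t.re := by
    rw [htval, Complex.ofReal_re]
    exact Finset.sum_pos' (fun i _ => Complex.normSq_nonneg _)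
      ⟨i0, Finset.mem_univ _, Complex.normSq_pos.2 hi0⟩
  have htim : t.im = 0 := by rw [htval]; exact Complex.ofReal_im _
  have hcim : c.im = 0 := by
    have h5 := congrArg Complex.im hcreal
    simp only [Complex.star_def, Complex.conj_im] at h5
    linarith
  have hlt : lam * t = c := by
    rw [hc, heig, dotProduct_smul, smul_eq_mul, ht]
  have h6 := congrArg Complex.im hlt
  rw [Complex.mul_im, htim, hcim, mul_zero, zero_add] at h6
  rcases mul_eq_zero.1 h6 with h | h
  · exact h
  · exact absurd h htre.ne'
end

section
/- Let G be a finite simple undirected graph on n vertices in which every vertex has degree at least 1, with random-walk matrix P, and let X be an n×n real diagonal matrix with X_{ii} ≥ 1 for all i (in particular any X ∈ K). Then the matrix Z = X − (X−I)P is invertible. -/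
open Matrix

theorem Zmat_invertible
    {n : ℕ} (G : SimpleGraph (Fin n)) [DecidableRel G.Adj]
    (hdeg : ∀ v, 0 < G.degree v)
    (X : Matrix (Fin n) (Fin n) ℝ) (hX : X.IsDiag) (hX1 : ∀ i, 1 ≤ X i i) :
    IsUnit (X - (X - 1) * rwMatrix G) := by
  set Z := X - (X - 1) * rwMatrix G with hZ
  have hrowsum : ∀ k, ∑ j, rwMatrix G k j = 1 := by
    intro k
    have hd : (0 : ℝ) < (G.degree k : ℝ) := by exact_mod_cast hdeg k
    have : ∑ j, rwMatrix G k j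
        = ∑ j ∈ G.neighborFinset k, (1 : ℝ) / (G.degree k) := by
      rw [SimpleGraph.neighborFinset_eq_filter, Finset.sum_filter]
      simp [rwMatrix]
    rw [this, Finset.sum_const, SimpleGraph.card_neighborFinset_eq_degree,
      nsmul_eq_mul]
    field_simp
  have hZentry : ∀ k j, Z k j = X k j - (X k k - 1) * rwMatrix G k j := by
    intro k j
    simp only [hZ, Matrix.sub_apply, Matrix.mul_apply]
    congr 1
    rw [Finset.sum_eq_single k]
    · simp [Matrix.one_apply]
    · intro b _ hb
      have : X k b = 0 := hX hb.symm
      simp [Matrix.sub_apply, Matrix.one_apply, hb.symm, this]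
    · simp
  have hZdiag : ∀ k, Z k k = X k k := by
    intro k
    rw [hZentry]
    simp [rwMatrix, SimpleGraph.irrefl]
  have hdet : Z.det ≠ 0 := by
    apply det_ne_zero_of_sum_row_lt_diag
    intro k
    have hX1k := hX1 k
    calc ∑ j ∈ Finset.univ.erase k, ‖Z k j‖
        = ∑ j ∈ Finset.univ.erase k, (X k k - 1) * rwMatrix G k j := by
          apply Finset.sum_congr rfl
          intro j hj
          have hjk : j ≠ k := (Finset.mem_erase.mp hj).1
          rw [hZentry, hX hjk.symm]
          have h0 : 0 ≤ rwMatrix G k j := by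
            simp only [rwMatrix]
            positivity
          rw [Real.norm_eq_abs, abs_of_nonpos (by nlinarith), zero_sub, neg_neg]
      _ = (X k k - 1) * ∑ j ∈ Finset.univ.erase k, rwMatrix G k j := by
          rw [Finset.mul_sum]
      _ ≤ (X k k - 1) * 1 := by
          apply mul_le_mul_of_nonneg_left _ (by linarith)
          rw [← hrowsum k]
          apply Finset.sum_le_sum_of_subset_of_nonneg (Finset.erase_subset _ _)
          intro j _ _
          simp only [rwMatrix]; positivity
      _ < ‖Z k k‖ := by
          rw [hZdiag, Real.norm_eq_abs, abs_of_pos (by linarith)]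
          linarith
  exact (Matrix.isUnit_iff_isUnit_det Z).mpr (isUnit_iff_ne_zero.mpr hdet)
end

section
/- Let P be an n×n row-stochastic real matrix (P·1 = 1) and let X be an n×n real diagonal matrix such that Z = X − (X−I)P is invertible. Then for every s ∈ ℝ^n, 1ᵀ Z⁻¹ (1 − s) = n − 1ᵀ Z⁻¹ s. In particular, minimizing 1ᵀ (X − (X−I)P)⁻¹ (1 − s) over X is equivalent to maximizing 1ᵀ (X − (X−I)P)⁻¹ s over X, so the opinion maximization problem reduces to the opinion minimization problem with innate opinions replaced by 1 − s. -/
open Matrix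

theorem maximization_reduces_to_minimization
    {n : ℕ} (P : Matrix (Fin n) (Fin n) ℝ) (hP : P *ᵥ (1 : Fin n → ℝ) = 1)
    (X : Matrix (Fin n) (Fin n) ℝ) (hX : X.IsDiag)
    (hinv : IsUnit (X - (X - 1) * P)) :
    ∀ s : Fin n → ℝ,
      (1 : Fin n → ℝ) ⬝ᵥ ((X - (X - 1) * P)⁻¹ *ᵥ ((1 : Fin n → ℝ) - s)) =
        n - (1 : Fin n → ℝ) ⬝ᵥ ((X - (X - 1) * P)⁻¹ *ᵥ s) := by
  intro s
  set Z := X - (X - 1) * P with hZ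
  have hZ1 : Z *ᵥ (1 : Fin n → ℝ) = 1 := by
    rw [hZ, Matrix.sub_mulVec, ← Matrix.mulVec_mulVec, hP, Matrix.sub_mulVec, Matrix.one_mulVec]
    abel
  have hinv1 : Z⁻¹ *ᵥ (1 : Fin n → ℝ) = 1 := by
    calc Z⁻¹ *ᵥ (1 : Fin n → ℝ) = Z⁻¹ *ᵥ (Z *ᵥ 1) := by rw [hZ1]
    _ = (Z⁻¹ * Z) *ᵥ 1 := by rw [Matrix.mulVec_mulVec]
    _ = 1 := by rw [Matrix.nonsing_inv_mul Z ((Matrix.isUnit_iff_isUnit_det Z).mp hinv), Matrix.one_mulVec]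
  rw [Matrix.mulVec_sub, dotProduct_sub, hinv1]
  simp [dotProduct, Finset.card_univ]
end
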